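/- Suppose ∇f is L₁-Lipschitz on E with L₁ > 0, the Hessian map x ↦ ∇²f(x) is L₂-Lipschitz in operator norm with L₂ > 0, the Luo–Tseng error bound holds, the IRPN iteration hypotheses hold, ρ = 1, c ≥ κ·L₂, and η ≤ κ²·L₂/(2(L₁+1)). Then the sequence {x^k} converges to some x* ∈ X, and the convergence is at least Q-quadratic: there exist C > 0 and an integer k₀ ≥ 0 such that ‖x^{k+1} − x*‖ ≤ C·‖x^k − x*‖² for all k ≥ k₀. -/

import Mathlib

open Filter Set Metric Topology
open scoped RealInnerProductSpace

set_option linter.unusedSectionVars false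
set_option linter.unusedTactic false

section auxlemmas
variable {V : Type*} [NormedAddCommGroup V] [InnerProductSpace ℝ V] [CompleteSpace V]

section aux1
lemma hasDerivAt_line {f : V → ℝ} {G : V} (x v : V) (t₀ : ℝ)
    (hG : HasGradientAt f G (x + t₀ • v)) :
    HasDerivAt (fun t : ℝ => f (x + t • v)) ⟪G, v⟫ t₀ := by
  have hc : HasDerivAt (fun t : ℝ => x + t • v) v t₀ := by
    simpa using ((hasDerivAt_id t₀).smul_const v).const_add x
  have := hG.hasFDerivAt.comp_hasDerivAt t₀ hc
  simpa [Function.comp_def] using this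

lemma convex_grad_le {f : V → ℝ} (hf : ConvexOn ℝ Set.univ f) {x y G : V}
    (hG : HasGradientAt f G x) : f x + ⟪G, y - x⟫ ≤ f y := by
  set φ : ℝ → ℝ := fun t => f (x + t • (y - x)) with hφ
  have hder : HasDerivAt φ ⟪G, y - x⟫ 0 := hasDerivAt_line x (y - x) 0 (by simpa using hG)
  have hslope : Tendsto (slope φ 0) (𝓝[>] 0) (𝓝 ⟪G, y - x⟫) :=
    (hasDerivAt_iff_tendsto_slope.1 hder).mono_left
      (nhdsWithin_mono 0 (fun t ht => ne_of_gt ht))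
  have hev : ∀ᶠ t in 𝓝[>] (0:ℝ), slope φ 0 t ≤ f y - f x := by
    filter_upwards [Ioo_mem_nhdsGT_of_mem (Set.mem_Ico.2 ⟨le_refl (0:ℝ), one_pos⟩)] with t ht
    have h1 : φ t ≤ (1 - t) * f x + t * f y := by
      have hcomb := hf.2 (Set.mem_univ x) (Set.mem_univ y)
        (by linarith [ht.2] : (0:ℝ) ≤ 1 - t) (le_of_lt ht.1) (by ring)
      have he : x + t • (y - x) = (1 - t) • x + t • y := by module
      simpa [hφ, he] using hcomb
    have h0 : φ 0 = f x := by simp [hφ]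
    rw [slope_def_field, sub_zero, div_le_iff₀ ht.1]
    nlinarith [ht.1]
  have := le_of_tendsto hslope hev
  linarith

lemma grad_mono {f : V → ℝ} (hf : ConvexOn ℝ Set.univ f) {x y Gx Gy : V}
    (hx : HasGradientAt f Gx x) (hy : HasGradientAt f Gy y) :
    0 ≤ ⟪Gy - Gx, y - x⟫ := by
  have h1 := convex_grad_le hf hx (y := y)
  have h2 := convex_grad_le hf hy (y := x)
  have e1 : ⟪Gy, x - y⟫ = -⟪Gy, y - x⟫ := by
    rw [← inner_neg_right]; rw [neg_sub]
  rw [inner_sub_left]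
  linarith [h1, h2, e1]
end aux1

lemma prox_vi {g : V → ℝ} {prox : V → V} (hg : ConvexOn ℝ Set.univ g)
    (hprox : ∀ v u, (1/2) * ‖prox v - v‖ ^ 2 + g (prox v) ≤ (1/2) * ‖u - v‖ ^ 2 + g u)
    (v u : V) : ⟪v - prox v, u - prox v⟫ ≤ g u - g (prox v) := by
  set p := prox v with hp
  refine le_of_forall_pos_le_add fun ε hε => ?_
  set S : ℝ := ‖u - p‖ ^ 2 with hS
  have hS0 : 0 ≤ S := by positivity
  set t : ℝ := min 1 (2 * ε / (S + 1)) with htdef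
  have ht0 : 0 < t := lt_min one_pos (by positivity)
  have ht1 : t ≤ 1 := min_le_left _ _
  have hcomb := hg.2 (Set.mem_univ p) (Set.mem_univ u)
    (by linarith : (0:ℝ) ≤ 1 - t) (le_of_lt ht0) (by ring)
  have hkey := hprox v ((1 - t) • p + t • u)
  have hexp : ‖((1 - t) • p + t • u) - v‖ ^ 2
      = ‖p - v‖ ^ 2 + 2 * t * ⟪p - v, u - p⟫ + t ^ 2 * S := by
    have he : ((1 - t) • p + t • u) - v = (p - v) + t • (u - p) := by module
    rw [he, norm_add_sq_real, real_inner_smul_right, norm_smul, Real.norm_eq_abs,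
      mul_pow, sq_abs, hS]
    ring
  simp only [smul_eq_mul] at hcomb
  have h5 : 0 ≤ t * (⟪p - v, u - p⟫ + t / 2 * S + (g u - g p)) := by
    rw [hexp] at hkey
    nlinarith [hkey, hcomb]
  have h6 : 0 ≤ ⟪p - v, u - p⟫ + t / 2 * S + (g u - g p) :=
    nonneg_of_mul_nonneg_right h5 ht0
  have h7 : t * (S + 1) ≤ 2 * ε := by
    have h7a : t ≤ 2 * ε / (S + 1) := min_le_right _ _
    calc t * (S + 1) ≤ (2 * ε / (S + 1)) * (S + 1) :=
          mul_le_mul_of_nonneg_right h7a (by linarith)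
      _ = 2 * ε := by field_simp
  have h8 : t / 2 * S ≤ ε := by nlinarith [ht0]
  have h9 : ⟪v - p, u - p⟫ = -⟪p - v, u - p⟫ := by
    rw [← inner_neg_left]; rw [neg_sub]
  linarith [h6, h8, h9]

lemma prox_nonexp {g : V → ℝ} {prox : V → V} (hg : ConvexOn ℝ Set.univ g)
    (hprox : ∀ v u, (1/2) * ‖prox v - v‖ ^ 2 + g (prox v) ≤ (1/2) * ‖u - v‖ ^ 2 + g u)
    (a b : V) : ‖prox a - prox b‖ ≤ ‖a - b‖ := by
  have h1 := prox_vi hg hprox a (prox b)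
  have h2 := prox_vi hg hprox b (prox a)
  have e : ⟪a - prox a, prox b - prox a⟫ + ⟪b - prox b, prox a - prox b⟫
      = ‖prox a - prox b‖ ^ 2 - ⟪a - b, prox a - prox b⟫ := by
    rw [← real_inner_self_eq_norm_sq]
    simp only [inner_sub_left, inner_sub_right]
    have c1 : ⟪a, prox b⟫ = ⟪prox b, a⟫ := real_inner_comm _ _
    have c2 : ⟪prox a, prox b⟫ = ⟪prox b, prox a⟫ := real_inner_comm _ _
    linarith
  have key : ‖prox a - prox b‖ ^ 2 ≤ ⟪a - b, prox a - prox b⟫ := by linarith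
  have hn := real_inner_le_norm (a - b) (prox a - prox b)
  nlinarith [norm_nonneg (prox a - prox b), norm_nonneg (a - b), key, hn]

lemma min_subgrad {f g : V → ℝ} {G : V} {xb : V}
    (hg : ConvexOn ℝ Set.univ g) (hG : HasGradientAt f G xb)
    (hmin : ∀ z, f xb + g xb ≤ f z + g z) (u : V) :
    ⟪-G, u - xb⟫ ≤ g u - g xb := by
  set φ : ℝ → ℝ := fun t => f (xb + t • (u - xb)) with hφ
  have hder : HasDerivAt φ ⟪G, u - xb⟫ 0 := hasDerivAt_line xb (u - xb) 0 (by simpa using hG)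
  have hslope : Tendsto (slope φ 0) (𝓝[>] 0) (𝓝 ⟪G, u - xb⟫) :=
    (hasDerivAt_iff_tendsto_slope.1 hder).mono_left
      (nhdsWithin_mono 0 (fun t ht => ne_of_gt ht))
  have hev : ∀ᶠ t in 𝓝[>] (0:ℝ), g xb - g u ≤ slope φ 0 t := by
    filter_upwards [Ioo_mem_nhdsGT_of_mem (Set.mem_Ico.2 ⟨le_refl (0:ℝ), one_pos⟩)] with t ht
    have hgc : g (xb + t • (u - xb)) ≤ (1 - t) * g xb + t * g u := by
      have hcomb := hg.2 (Set.mem_univ xb) (Set.mem_univ u)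
        (by linarith [ht.2] : (0:ℝ) ≤ 1 - t) (le_of_lt ht.1) (by ring)
      have he : xb + t • (u - xb) = (1 - t) • xb + t • u := by module
      simpa [he] using hcomb
    have hm := hmin (xb + t • (u - xb))
    have h0 : φ 0 = f xb := by simp [hφ]
    rw [slope_def_field, sub_zero, le_div_iff₀ ht.1, h0]
    simp only [hφ]
    nlinarith [ht.1]
  have := ge_of_tendsto hslope hev
  have h9 : ⟪-G, u - xb⟫ = -⟪G, u - xb⟫ := by rw [inner_neg_left]
  linarith

lemma min_fixed {f g : V → ℝ} {G : V} {xb : V} {prox : V → V}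
    (hg : ConvexOn ℝ Set.univ g)
    (hprox : ∀ v u, (1/2) * ‖prox v - v‖ ^ 2 + g (prox v) ≤ (1/2) * ‖u - v‖ ^ 2 + g u)
    (hG : HasGradientAt f G xb) (hmin : ∀ z, f xb + g xb ≤ f z + g z) :
    prox (xb - G) = xb := by
  set p := prox (xb - G) with hp
  have h1 := prox_vi hg hprox (xb - G) xb
  have h2 := min_subgrad hg hG hmin p
  have e : ‖xb - p‖ ^ 2 = ⟪xb - G - p, xb - p⟫ + ⟪-G, p - xb⟫ := by
    rw [← real_inner_self_eq_norm_sq]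
    simp only [inner_sub_left, inner_sub_right, inner_neg_left]
    have c1 : ⟪G, xb⟫ = ⟪xb, G⟫ := real_inner_comm _ _
    have c2 : ⟪G, p⟫ = ⟪p, G⟫ := real_inner_comm _ _
    ring_nf
  have hsq : ‖xb - p‖ ^ 2 ≤ 0 := by linarith
  have : xb - p = 0 := by
    have := norm_nonneg (xb - p)
    have h0 : ‖xb - p‖ = 0 := by nlinarith
    exact norm_eq_zero.1 h0
  have := sub_eq_zero.1 this
  exact this.symm

lemma hess_psd {f : V → ℝ} {f' : V → V} {hess : V → V →L[ℝ] V}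
    (hf : ConvexOn ℝ Set.univ f) (hgrad : ∀ x, HasGradientAt f (f' x) x)
    (hhess : ∀ x, HasFDerivAt f' (hess x) x) (x u : V) : 0 ≤ ⟪hess x u, u⟫ := by
  set ψ : ℝ → ℝ := fun t => ⟪f' (x + t • u), u⟫ with hψ
  have hline : HasDerivAt (fun t : ℝ => f' (x + t • u)) (hess x u) 0 := by
    have hc : HasDerivAt (fun t : ℝ => x + t • u) u 0 := by
      simpa using ((hasDerivAt_id (0:ℝ)).smul_const u).const_add x
    have := (hhess (x + (0:ℝ) • u)).comp_hasDerivAt 0 hc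
    simpa [Function.comp_def] using this
  have hder : HasDerivAt ψ ⟪hess x u, u⟫ 0 := by
    have := HasDerivAt.inner ℝ hline (hasDerivAt_const (0:ℝ) u)
    simpa using this
  have hslope : Tendsto (slope ψ 0) (𝓝[>] 0) (𝓝 ⟪hess x u, u⟫) :=
    (hasDerivAt_iff_tendsto_slope.1 hder).mono_left
      (nhdsWithin_mono 0 (fun t ht => ne_of_gt ht))
  have hev : ∀ᶠ t in 𝓝[>] (0:ℝ), 0 ≤ slope ψ 0 t := by
    filter_upwards [self_mem_nhdsWithin] with t ht
    replace ht : (0:ℝ) < t := ht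
    have hm := grad_mono hf (hgrad x) (hgrad (x + t • u))
    have he : (x + t • u) - x = t • u := by module
    rw [he, real_inner_smul_right] at hm
    have h2 : 0 ≤ ⟪f' (x + t • u) - f' x, u⟫ := nonneg_of_mul_nonneg_right hm ht
    rw [slope_def_field, sub_zero, le_div_iff₀ ht]
    have h3 : ψ t - ψ 0 = ⟪f' (x + t • u) - f' x, u⟫ := by
      simp [hψ, inner_sub_left]
    linarith [h3, h2]
  have := ge_of_tendsto hslope hev
  linarith


lemma hasDerivAt_line' {f : V → ℝ} {G : V} (x v : V) (t₀ : ℝ)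
    (hG : HasGradientAt f G (x + t₀ • v)) :
    HasDerivAt (fun t : ℝ => f (x + t • v)) ⟪G, v⟫ t₀ := by
  have hc : HasDerivAt (fun t : ℝ => x + t • v) v t₀ := by
    simpa using ((hasDerivAt_id t₀).smul_const v).const_add x
  have := hG.hasFDerivAt.comp_hasDerivAt t₀ hc
  simpa [Function.comp_def] using this

lemma hess_norm_le {f' : V → V} {hess : V → V →L[ℝ] V} {L₁ : ℝ} (hL : 0 ≤ L₁)
    (hhess : ∀ x, HasFDerivAt f' (hess x) x)
    (hlip : ∀ y z, ‖f' y - f' z‖ ≤ L₁ * ‖y - z‖) (x : V) : ‖hess x‖ ≤ L₁ := by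
  have hlw : LipschitzWith (Real.toNNReal L₁) f' := LipschitzWith.of_dist_le_mul fun y z => by
    rw [dist_eq_norm, dist_eq_norm, Real.coe_toNNReal L₁ hL]; exact hlip y z
  have := (hhess x).le_of_lipschitz hlw
  rwa [Real.coe_toNNReal L₁ hL] at this

lemma taylor_grad {f' : V → V} {hess : V → V →L[ℝ] V} {L₂ : ℝ}
    (hhess : ∀ x, HasFDerivAt f' (hess x) x)
    (hlip2 : ∀ y z, ‖hess y - hess z‖ ≤ L₂ * ‖y - z‖) (x u : V) :
    ‖f' (x + u) - f' x - hess x u‖ ≤ L₂ / 2 * ‖u‖ ^ 2 := by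
  set ψ : ℝ → V := fun t => f' (x + t • u) - f' x - t • (hess x u) with hψdef
  have hψ : ∀ t : ℝ, HasDerivAt ψ (hess (x + t • u) u - hess x u) t := by
    intro t
    have hc : HasDerivAt (fun s : ℝ => x + s • u) u t := by
      simpa using ((hasDerivAt_id t).smul_const u).const_add x
    have h1 : HasDerivAt (fun s : ℝ => f' (x + s • u)) (hess (x + t • u) u) t :=
      (hhess (x + t • u)).comp_hasDerivAt t hc
    have h2 : HasDerivAt (fun s : ℝ => s • (hess x u)) (hess x u) t := by
      simpa using (hasDerivAt_id t).smul_const (hess x u)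
    exact (h1.sub_const (f' x)).sub h2
  have key := image_norm_le_of_norm_deriv_right_le_deriv_boundary
    (f := ψ) (f' := fun t => hess (x + t • u) u - hess x u) (a := 0) (b := 1)
    (B := fun t => L₂ / 2 * t ^ 2 * ‖u‖ ^ 2) (B' := fun t => L₂ * t * ‖u‖ ^ 2)
    (fun t _ => (hψ t).continuousAt.continuousWithinAt)
    (fun t _ => (hψ t).hasDerivWithinAt)
    (by simp [hψdef])
    (fun t => by
      have h3 : HasDerivAt (fun s : ℝ => L₂ / 2 * s ^ 2 * ‖u‖ ^ 2) (L₂ * t * ‖u‖ ^ 2) t := by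
        have := ((hasDerivAt_pow 2 t).const_mul (L₂ / 2)).mul_const (‖u‖ ^ 2)
        exact this.congr_deriv (by push_cast; ring)
      exact h3)
    (fun t ht => by
      show ‖hess (x + t • u) u - hess x u‖ ≤ L₂ * t * ‖u‖ ^ 2
      have e : hess (x + t • u) u - hess x u = (hess (x + t • u) - hess x) u := by
        simp [ContinuousLinearMap.sub_apply]
      rw [e]
      calc ‖(hess (x + t • u) - hess x) u‖ ≤ ‖hess (x + t • u) - hess x‖ * ‖u‖ :=
            ContinuousLinearMap.le_opNorm _ _
        _ ≤ (L₂ * ‖t • u‖) * ‖u‖ := by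
            apply mul_le_mul_of_nonneg_right _ (norm_nonneg u)
            simpa using hlip2 (x + t • u) x
        _ ≤ L₂ * t * ‖u‖ ^ 2 := by
            rw [norm_smul, Real.norm_eq_abs, abs_of_nonneg ht.1]
            nlinarith [norm_nonneg u])
  have := key (Set.mem_Icc.2 ⟨zero_le_one, le_refl 1⟩)
  simpa [hψdef] using this

lemma taylor_f {f : V → ℝ} {f' : V → V} {hess : V → V →L[ℝ] V} {L₂ : ℝ}
    (hgrad : ∀ x, HasGradientAt f (f' x) x)
    (hhess : ∀ x, HasFDerivAt f' (hess x) x)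
    (hlip2 : ∀ y z, ‖hess y - hess z‖ ≤ L₂ * ‖y - z‖) (x u : V) :
    f (x + u) ≤ f x + ⟪f' x, u⟫ + 1/2 * ⟪hess x u, u⟫ + L₂ / 6 * ‖u‖ ^ 3 := by
  set φ : ℝ → ℝ := fun t =>
    f (x + t • u) - t * ⟪f' x, u⟫ - t ^ 2 / 2 * ⟪hess x u, u⟫ - t ^ 3 / 6 * (L₂ * ‖u‖ ^ 3)
    with hφdef
  have hφ : ∀ t : ℝ, HasDerivAt φ
      (⟪f' (x + t • u), u⟫ - ⟪f' x, u⟫ - t * ⟪hess x u, u⟫ - t ^ 2 / 2 * (L₂ * ‖u‖ ^ 3)) t := by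
    intro t
    have h1 : HasDerivAt (fun s : ℝ => f (x + s • u)) ⟪f' (x + t • u), u⟫ t :=
      hasDerivAt_line' x u t (hgrad _)
    have h2 : HasDerivAt (fun s : ℝ => s * ⟪f' x, u⟫) ⟪f' x, u⟫ t := by
      simpa using (hasDerivAt_id t).mul_const ⟪f' x, u⟫
    have h3 : HasDerivAt (fun s : ℝ => s ^ 2 / 2 * ⟪hess x u, u⟫) (t * ⟪hess x u, u⟫) t := by
      have := ((hasDerivAt_pow 2 t).div_const 2).mul_const ⟪hess x u, u⟫
      exact this.congr_deriv (by push_cast; ring)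
    have h4 : HasDerivAt (fun s : ℝ => s ^ 3 / 6 * (L₂ * ‖u‖ ^ 3)) (t ^ 2 / 2 * (L₂ * ‖u‖ ^ 3)) t := by
      have := ((hasDerivAt_pow 3 t).div_const 6).mul_const (L₂ * ‖u‖ ^ 3)
      exact this.congr_deriv (by push_cast; ring)
    exact ((h1.sub h2).sub h3).sub h4
  have hderiv_nonpos : ∀ t ∈ Set.Ioo (0:ℝ) 1, deriv φ t ≤ 0 := by
    intro t ht
    rw [(hφ t).deriv]
    have htg := taylor_grad hhess hlip2 x (t • u)
    have e1 : ⟪f' (x + t • u), u⟫ - ⟪f' x, u⟫ - t * ⟪hess x u, u⟫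
        = ⟪f' (x + t • u) - f' x - hess x (t • u), u⟫ := by
      rw [map_smul]
      first
      | (simp [inner_sub_left, real_inner_smul_left]; ring)
      | simp [inner_sub_left, real_inner_smul_left]
    have e2 : ⟪f' (x + t • u) - f' x - hess x (t • u), u⟫
        ≤ ‖f' (x + t • u) - f' x - hess x (t • u)‖ * ‖u‖ := real_inner_le_norm _ _
    have e3 : ‖f' (x + t • u) - f' x - hess x (t • u)‖ * ‖u‖ ≤ (L₂ / 2 * ‖t • u‖ ^ 2) * ‖u‖ :=
      mul_le_mul_of_nonneg_right htg (norm_nonneg u)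
    have e4 : ‖t • u‖ ^ 2 = t ^ 2 * ‖u‖ ^ 2 := by
      rw [norm_smul, Real.norm_eq_abs, mul_pow, sq_abs]
    rw [e1]
    rw [e4] at e3
    have e6 : L₂ / 2 * (t ^ 2 * ‖u‖ ^ 2) * ‖u‖ = t ^ 2 / 2 * (L₂ * ‖u‖ ^ 3) := by ring
    linarith [e2, e3, e6]
  have hanti : AntitoneOn φ (Set.Icc 0 1) := by
    apply antitoneOn_of_deriv_nonpos (convex_Icc 0 1)
    · exact fun t _ => (hφ t).continuousAt.continuousWithinAt
    · intro t ht
      rw [interior_Icc] at ht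
      exact (hφ t).differentiableAt.differentiableWithinAt
    · intro t ht
      rw [interior_Icc] at ht
      exact hderiv_nonpos t ht
  have := hanti (Set.mem_Icc.2 ⟨le_refl 0, zero_le_one⟩) (Set.mem_Icc.2 ⟨zero_le_one, le_refl 1⟩)
    zero_le_one
  have h0 : φ 0 = f x := by simp [hφdef]
  have h1 : φ 1 = f (x + u) - ⟪f' x, u⟫ - 1 / 2 * ⟪hess x u, u⟫ - 1 / 6 * (L₂ * ‖u‖ ^ 3) := by
    first
    | (simp [hφdef]; ring)
    | simp [hφdef]
  rw [h0, h1] at this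
  linarith

lemma descent_quad {f : V → ℝ} {f' : V → V} {L₁ : ℝ} (hL : 0 ≤ L₁)
    (hgrad : ∀ x, HasGradientAt f (f' x) x)
    (hlip : ∀ y z, ‖f' y - f' z‖ ≤ L₁ * ‖y - z‖) (x u : V) :
    f (x + u) ≤ f x + ⟪f' x, u⟫ + L₁ * ‖u‖ ^ 2 := by
  set φ : ℝ → ℝ := fun t => f (x + t • u) - t * ⟪f' x, u⟫ - t ^ 2 * (L₁ * ‖u‖ ^ 2) with hφdef
  have hφ : ∀ t : ℝ, HasDerivAt φ
      (⟪f' (x + t • u), u⟫ - ⟪f' x, u⟫ - 2 * t * (L₁ * ‖u‖ ^ 2)) t := by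
    intro t
    have h1 : HasDerivAt (fun s : ℝ => f (x + s • u)) ⟪f' (x + t • u), u⟫ t :=
      hasDerivAt_line' x u t (hgrad _)
    have h2 : HasDerivAt (fun s : ℝ => s * ⟪f' x, u⟫) ⟪f' x, u⟫ t := by
      simpa using (hasDerivAt_id t).mul_const ⟪f' x, u⟫
    have h3 : HasDerivAt (fun s : ℝ => s ^ 2 * (L₁ * ‖u‖ ^ 2)) (2 * t * (L₁ * ‖u‖ ^ 2)) t := by
      have := (hasDerivAt_pow 2 t).mul_const (L₁ * ‖u‖ ^ 2)
      exact this.congr_deriv (by push_cast; ring)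
    exact (h1.sub h2).sub h3
  have hderiv_nonpos : ∀ t ∈ Set.Ioo (0:ℝ) 1, deriv φ t ≤ 0 := by
    intro t ht
    rw [(hφ t).deriv]
    have e1 : ⟪f' (x + t • u), u⟫ - ⟪f' x, u⟫ = ⟪f' (x + t • u) - f' x, u⟫ := by
      rw [inner_sub_left]
    have e2 : ⟪f' (x + t • u) - f' x, u⟫ ≤ ‖f' (x + t • u) - f' x‖ * ‖u‖ :=
      real_inner_le_norm _ _
    have e3 : ‖f' (x + t • u) - f' x‖ ≤ L₁ * ‖t • u‖ := by simpa using hlip (x + t • u) x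
    have e4 : ‖t • u‖ = t * ‖u‖ := by
      rw [norm_smul, Real.norm_eq_abs, abs_of_nonneg ht.1.le]
    rw [e1]
    rw [e4] at e3
    have e5 := mul_le_mul_of_nonneg_right e3 (norm_nonneg u)
    have e6 : L₁ * (t * ‖u‖) * ‖u‖ = t * (L₁ * ‖u‖ ^ 2) := by ring
    nlinarith [e2, e5, e6, mul_nonneg ht.1.le (mul_nonneg hL (sq_nonneg ‖u‖))]
  have hanti : AntitoneOn φ (Set.Icc 0 1) := by
    apply antitoneOn_of_deriv_nonpos (convex_Icc 0 1)
    · exact fun t _ => (hφ t).continuousAt.continuousWithinAt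
    · intro t ht
      rw [interior_Icc] at ht
      exact (hφ t).differentiableAt.differentiableWithinAt
    · intro t ht
      rw [interior_Icc] at ht
      exact hderiv_nonpos t ht
  have := hanti (Set.mem_Icc.2 ⟨le_refl 0, zero_le_one⟩) (Set.mem_Icc.2 ⟨zero_le_one, le_refl 1⟩)
    zero_le_one
  have h0 : φ 0 = f x := by simp [hφdef]
  have h1 : φ 1 = f (x + u) - ⟪f' x, u⟫ - L₁ * ‖u‖ ^ 2 := by
    first
    | (simp [hφdef]; ring)
    | simp [hφdef]
  rw [h0, h1] at this
  linarith

end auxlemmas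

abbrev E (n : ℕ) := EuclideanSpace ℝ (Fin n)

set_option maxHeartbeats 4000000 in
/-- Under the L₁-Lipschitz gradient, L₂-Lipschitz Hessian, Luo–Tseng
error bound, and IRPN iteration hypotheses, if `ρ = 1`, `c ≥ κL₂`, and
`η ≤ κ²L₂/(2(L₁+1))`, then `{xᵏ}` converges to some `x* ∈ X` at least
Q-quadratically: there are `C > 0` and `k₀` with
`‖x^{k+1} − x*‖ ≤ C·‖xᵏ − x*‖²` for all `k ≥ k₀`. -/
theorem stmt19 {n : ℕ} (f g : E n → ℝ) (f' : E n → E n)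
    (hess : E n → E n →L[ℝ] E n) (prox : E n → E n)
    (hfconv : ConvexOn ℝ Set.univ f) (hfC2 : ContDiff ℝ 2 f)
    (hgrad : ∀ x, HasGradientAt f (f' x) x)
    (hhess : ∀ x, HasFDerivAt f' (hess x) x)
    (hsa : ∀ x u w, ⟪hess x u, w⟫ = ⟪u, hess x w⟫)
    (hgconv : ConvexOn ℝ Set.univ g) (hgcont : Continuous g)
    (hprox : ∀ v u, (1/2) * ‖prox v - v‖ ^ 2 + g (prox v) ≤ (1/2) * ‖u - v‖ ^ 2 + g u)
    (F : E n → ℝ) (hF : ∀ y, F y = f y + g y)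
    (X : Set (E n)) (hX : X = {y | ∀ z, F y ≤ F z}) (hXne : X.Nonempty)
    (r : E n → ℝ) (hr : ∀ y, r y = ‖y - prox (y - f' y)‖)
    (L₁ : ℝ) (hL₁ : 0 < L₁) (hlip : ∀ y z, ‖f' y - f' z‖ ≤ L₁ * ‖y - z‖)
    -- IRPN parameters
    (θ ζ η c ρ β : ℝ)
    (hθ : θ ∈ Set.Ioo (0:ℝ) (1/2)) (hζ : ζ ∈ Set.Ioo θ (1/2))
    (hη : η ∈ Set.Ioo (0:ℝ) 1) (hc : 0 < c) (hρ : ρ ∈ Set.Icc (0:ℝ) 1)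
    (hβ : β ∈ Set.Ioo (0:ℝ) 1)
    -- IRPN iterates and auxiliary data
    (x xh : ℕ → E n) (μ : ℕ → ℝ) (H : ℕ → E n →L[ℝ] E n)
    (ℓ q : ℕ → E n → ℝ) (rk : ℕ → E n → ℝ)
    (d : ℕ → E n) (i : ℕ → ℕ) (α : ℕ → ℝ)
    (hrpos : ∀ k, 0 < r (x k))
    (hμ : ∀ k, μ k = c * r (x k) ^ ρ)
    (hH : ∀ k, H k = hess (x k) + μ k • ContinuousLinearMap.id ℝ (E n))
    (hℓ : ∀ k y, ℓ k y = f (x k) + ⟪f' (x k), y - x k⟫ + g y)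
    (hq : ∀ k y, q k y = ℓ k y + (1/2) * ⟪H k (y - x k), y - x k⟫)
    (hrk : ∀ k y, rk k y = ‖y - prox (y - f' (x k) - H k (y - x k))‖)
    (hinex1 : ∀ k, rk k (xh k) ≤ η * min (r (x k)) (r (x k) ^ (1 + ρ)))
    (hinex2 : ∀ k, q k (xh k) - q k (x k) ≤ ζ * (ℓ k (xh k) - ℓ k (x k)))
    (hd : ∀ k, d k = xh k - x k)
    (hdesc : ∀ k, F (x k) - F (x k + β ^ i k • d k) ≥
      θ * (ℓ k (x k) - ℓ k (x k + β ^ i k • d k)))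
    (hmin : ∀ k j, j < i k → ¬ (F (x k) - F (x k + β ^ j • d k) ≥
      θ * (ℓ k (x k) - ℓ k (x k + β ^ j • d k))))
    (hα : ∀ k, α k = β ^ i k)
    (hstep : ∀ k, x (k + 1) = x k + α k • d k)
    -- Lipschitz Hessian
    (L₂ : ℝ) (hL₂ : 0 < L₂) (hlip2 : ∀ y z, ‖hess y - hess z‖ ≤ L₂ * ‖y - z‖)
    -- Luo-Tseng error bound
    (κ ε : ℝ) (hκ : 0 < κ) (hε : 0 < ε)
    (hEB : ∀ y : E n, F y ≤ F (x 0) → r y ≤ ε → Metric.infDist y X ≤ κ * r y)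
    (hρ1 : ρ = 1) (hcκ : κ * L₂ ≤ c) (hηb : η ≤ κ ^ 2 * L₂ / (2 * (L₁ + 1))) :
    ∃ xstar ∈ X, Tendsto x atTop (nhds xstar) ∧
      ∃ C : ℝ, 0 < C ∧ ∃ k₀ : ℕ, ∀ k, k₀ ≤ k →
        ‖x (k + 1) - xstar‖ ≤ C * ‖x k - xstar‖ ^ 2 := by
  obtain ⟨hθ0, hθhalf⟩ := hθ
  obtain ⟨hζθ, hζhalf⟩ := hζ
  obtain ⟨hη0, hη1⟩ := hη
  obtain ⟨hβ0, hβ1⟩ := hβ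
  have hζ0 : 0 < ζ := lt_trans hθ0 hζθ
  have h1ζ : 0 < 1 - ζ := by linarith
  have hL₁' : (0:ℝ) ≤ L₁ := hL₁.le
  obtain ⟨xmin, hxmin⟩ := hXne
  have hFxmin : ∀ z, F xmin ≤ F z := by rw [hX] at hxmin; exact hxmin
  -- basic rewrites
  have hμ' : ∀ k, μ k = c * r (x k) := fun k => by rw [hμ k, hρ1, Real.rpow_one]
  have hμpos : ∀ k, 0 < μ k := fun k => by rw [hμ' k]; exact mul_pos hc (hrpos k)
  have hxh : ∀ k, xh k = x k + d k := fun k => by rw [hd k]; abel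
  have hFl : ∀ k, ℓ k (x k) = F (x k) := fun k => by
    rw [hℓ k (x k), hF (x k)]; simp
  have hℓxh : ∀ k, ℓ k (xh k) = f (x k) + ⟪f' (x k), d k⟫ + g (xh k) := fun k => by
    rw [hℓ k (xh k), hd k]
  have hpsd : ∀ y u, (0:ℝ) ≤ ⟪hess y u, u⟫ := fun y u => hess_psd hfconv hgrad hhess y u
  have hHapply : ∀ k (z : E n), H k z = hess (x k) z + μ k • z := fun k z => by
    rw [hH k]; simp
  have hHdd : ∀ k (z : E n), ⟪H k z, z⟫ = ⟪hess (x k) z, z⟫ + μ k * ‖z‖ ^ 2 := fun k z => by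
    rw [hHapply k z, inner_add_left, real_inner_smul_left, real_inner_self_eq_norm_sq]
  have hHquad : ∀ k (z : E n), μ k * ‖z‖ ^ 2 ≤ ⟪H k z, z⟫ := fun k z => by
    rw [hHdd k z]; linarith [hpsd (x k) z]
  have hq0 : ∀ k, q k (x k) = ℓ k (x k) := fun k => by
    rw [hq k (x k)]; simp
  have hqxh : ∀ k, q k (xh k) = ℓ k (xh k) + (1/2) * ⟪H k (d k), d k⟫ := fun k => by
    rw [hq k (xh k), hd k]
  have hhalfHd : ∀ k, (1/2) * ⟪H k (d k), d k⟫ ≤ (1 - ζ) * (ℓ k (x k) - ℓ k (xh k)) := fun k => by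
    have h2 := hinex2 k
    rw [hqxh k, hq0 k] at h2
    nlinarith [h2]
  have hdelnn : ∀ k, 0 ≤ ℓ k (x k) - ℓ k (xh k) := fun k => by
    nlinarith [hhalfHd k, hHquad k (d k), hμpos k, sq_nonneg ‖d k‖, (hμpos k).le,
      mul_nonneg (hμpos k).le (sq_nonneg ‖d k‖)]
  have hdel : ∀ k, μ k * ‖d k‖ ^ 2 / (2 * (1 - ζ)) ≤ ℓ k (x k) - ℓ k (xh k) := fun k => by
    rw [div_le_iff₀ (by linarith)]
    nlinarith [hhalfHd k, hHquad k (d k)]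
  -- residual inexactness bounds
  have hrk1 : ∀ k, rk k (xh k) ≤ η * r (x k) := fun k => by
    refine le_trans (hinex1 k) (mul_le_mul_of_nonneg_left ?_ hη0.le)
    exact min_le_left _ _
  have hrexp : ∀ k, r (x k) ^ (1 + ρ) = r (x k) ^ 2 := fun k => by
    have h2 : (1 + ρ) = ((2:ℕ):ℝ) := by rw [hρ1]; norm_num
    rw [h2, Real.rpow_natCast]
  have hrk2 : ∀ k, rk k (xh k) ≤ η * r (x k) ^ 2 := fun k => by
    refine le_trans (hinex1 k) (mul_le_mul_of_nonneg_left ?_ hη0.le)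
    rw [← hrexp k]; exact min_le_right _ _
  -- fixed points of prox-gradient map
  have hfix : ∀ y : E n, (∀ z, F y ≤ F z) → prox (y - f' y) = y := fun y hy =>
    min_fixed hgconv hprox (hgrad y) (fun z => by rw [← hF, ← hF]; exact hy z)
  -- operator norm bounds
  have hessnorm : ∀ y, ‖hess y‖ ≤ L₁ := hess_norm_le hL₁' hhess hlip
  have hHnorm : ∀ k (z : E n), ‖H k z‖ ≤ (L₁ + μ k) * ‖z‖ := fun k z => by
    rw [hHapply k z]
    calc ‖hess (x k) z + μ k • z‖ ≤ ‖hess (x k) z‖ + ‖μ k • z‖ := norm_add_le _ _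
      _ ≤ L₁ * ‖z‖ + μ k * ‖z‖ := by
          gcongr
          · exact le_trans (ContinuousLinearMap.le_opNorm _ _)
              (mul_le_mul_of_nonneg_right (hessnorm (x k)) (norm_nonneg z))
          · rw [norm_smul, Real.norm_eq_abs, abs_of_pos (hμpos k)]
      _ = (L₁ + μ k) * ‖z‖ := by ring
  -- G6 : lower bound on the step in terms of the residual
  have hrd : ∀ k, (1 - η) * r (x k) ≤ (2 + L₁ + μ k) * ‖d k‖ := fun k => by
    set p := prox (xh k - f' (x k) - H k (d k)) with hpdef
    set p₀ := prox (x k - f' (x k)) with hp0def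
    have h1 : r (x k) = ‖x k - p₀‖ := hr (x k)
    have h2 : ‖xh k - p‖ = rk k (xh k) := by
      rw [hrk k (xh k), ← hd k]
    have h3 : ‖p - p₀‖ ≤ ‖d k - H k (d k)‖ := by
      have := prox_nonexp hgconv hprox (xh k - f' (x k) - H k (d k)) (x k - f' (x k))
      have e : (xh k - f' (x k) - H k (d k)) - (x k - f' (x k)) = d k - H k (d k) := by
        rw [hxh k]; abel
      rwa [e] at this
    have h4 : ‖d k - H k (d k)‖ ≤ ‖d k‖ + (L₁ + μ k) * ‖d k‖ :=
      le_trans (norm_sub_le _ _) (by linarith [hHnorm k (d k)])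
    have h5a := norm_sub_le_norm_sub_add_norm_sub (x k) p p₀
    have h5b := norm_sub_le_norm_sub_add_norm_sub (x k) (xh k) p
    have h5 : ‖x k - p₀‖ ≤ ‖x k - xh k‖ + ‖xh k - p‖ + ‖p - p₀‖ := by linarith
    have h6 : ‖x k - xh k‖ = ‖d k‖ := by rw [hxh k]; simp [norm_sub_rev]
    have h7 := hrk1 k
    rw [h1]
    nlinarith [h5, h6, h2, h3, h4, h7, norm_nonneg (d k), hrpos k]

  -- refined version of hdel without division
  have hdel2 : ∀ k, μ k * ‖d k‖ ^ 2 ≤ 2 * (1 - ζ) * (ℓ k (x k) - ℓ k (xh k)) := fun k => by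
    nlinarith [hhalfHd k, hHquad k (d k)]
  -- ℓ along segments
  have hℓt : ∀ k (t : ℝ), ℓ k (x k + t • d k)
      = f (x k) + t * ⟪f' (x k), d k⟫ + g (x k + t • d k) := fun k t => by
    rw [hℓ]
    have e : (x k + t • d k) - x k = t • d k := by abel
    rw [e, real_inner_smul_right]
  have hseg : ∀ k, ∀ t : ℝ, 0 ≤ t → t ≤ 1 →
      t * (ℓ k (x k) - ℓ k (xh k)) ≤ ℓ k (x k) - ℓ k (x k + t • d k) := by
    intro k t ht0 ht1
    have e2 : g (x k + t • d k) ≤ (1 - t) * g (x k) + t * g (xh k) := by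
      have hcomb := hgconv.2 (Set.mem_univ (x k)) (Set.mem_univ (xh k))
        (by linarith : (0:ℝ) ≤ 1 - t) ht0 (by ring)
      have he : (1 - t) • x k + t • xh k = x k + t • d k := by rw [hxh k]; module
      rw [← he]
      simpa [smul_eq_mul] using hcomb
    have e3 : ℓ k (x k) = f (x k) + g (x k) := by rw [hℓ]; simp
    rw [hℓt k t, hℓxh k, e3]
    nlinarith [e2]
  -- sufficient decrease at the accepted step
  have hFdec : ∀ k, θ * (β ^ i k * (ℓ k (x k) - ℓ k (xh k))) ≤ F (x k) - F (x (k + 1)) := by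
    intro k
    have hp1 : (0:ℝ) < β ^ i k := pow_pos hβ0 _
    have hp2 : β ^ i k ≤ 1 := pow_le_one₀ hβ0.le hβ1.le
    have hs := hseg k (β ^ i k) hp1.le hp2
    have hd1 := hdesc k
    have hx1 : x (k + 1) = x k + β ^ i k • d k := by rw [hstep k, hα k]
    rw [hx1]
    calc θ * (β ^ i k * (ℓ k (x k) - ℓ k (xh k)))
        ≤ θ * (ℓ k (x k) - ℓ k (x k + β ^ i k • d k)) := by
          apply mul_le_mul_of_nonneg_left hs hθ0.le
      _ ≤ F (x k) - F (x k + β ^ i k • d k) := hd1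
  have hFmono : ∀ k, F (x (k + 1)) ≤ F (x k) := by
    intro k
    have h1 := hFdec k
    have h2 : 0 ≤ θ * (β ^ i k * (ℓ k (x k) - ℓ k (xh k))) :=
      mul_nonneg hθ0.le (mul_nonneg (pow_pos hβ0 _).le (hdelnn k))
    linarith
  have hFx0 : ∀ k, F (x k) ≤ F (x 0) := by
    intro k
    induction k with
    | zero => exact le_refl _
    | succ k ih => exact le_trans (hFmono k) ih
  -- Armijo condition holds for all small steps
  have harmijo : ∀ k (t : ℝ), 0 < t → t ≤ 1 → 2 * (1 - ζ) * L₁ * t ≤ (1 - θ) * μ k →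
      θ * (ℓ k (x k) - ℓ k (x k + t • d k)) ≤ F (x k) - F (x k + t • d k) := by
    intro k t ht0 ht1 htτ
    have hdq := descent_quad hL₁' hgrad hlip (x k) (t • d k)
    have hFt : F (x k + t • d k) ≤ ℓ k (x k + t • d k) + L₁ * t ^ 2 * ‖d k‖ ^ 2 := by
      rw [hF, hℓt k t]
      have e1 : ⟪f' (x k), t • d k⟫ = t * ⟪f' (x k), d k⟫ := real_inner_smul_right _ _ _
      have e2 : ‖t • d k‖ ^ 2 = t ^ 2 * ‖d k‖ ^ 2 := by
        rw [norm_smul, Real.norm_eq_abs, mul_pow, sq_abs]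
      nlinarith [hdq]
    have hsegt := hseg k t ht0.le ht1
    have h1 : 2 * (1 - ζ) * (L₁ * t ^ 2 * ‖d k‖ ^ 2) ≤ (1 - θ) * t * (μ k * ‖d k‖ ^ 2) := by
      nlinarith [mul_le_mul_of_nonneg_right htτ (mul_nonneg ht0.le (sq_nonneg ‖d k‖))]
    have h2 : (1 - θ) * t * (μ k * ‖d k‖ ^ 2)
        ≤ (1 - θ) * t * (2 * (1 - ζ) * (ℓ k (x k) - ℓ k (xh k))) := by
      apply mul_le_mul_of_nonneg_left (hdel2 k)
      nlinarith [ht0.le]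
    have h4 : L₁ * t ^ 2 * ‖d k‖ ^ 2 ≤ (1 - θ) * (t * (ℓ k (x k) - ℓ k (xh k))) := by
      nlinarith [h1, h2]
    have h5 : (1 - θ) * (t * (ℓ k (x k) - ℓ k (xh k)))
        ≤ (1 - θ) * (ℓ k (x k) - ℓ k (x k + t • d k)) := by
      apply mul_le_mul_of_nonneg_left hsegt
      linarith
    have hFlk := hFl k
    linarith [hFt, h4, h5]
  -- lower bound on achieved decrease
  have hstep_lb : ∀ k, θ * (β * min 1 ((1 - θ) * μ k / (2 * (1 - ζ) * L₁))) *
      (ℓ k (x k) - ℓ k (xh k)) ≤ F (x k) - F (x (k + 1)) := by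
    intro k
    set τ := (1 - θ) * μ k / (2 * (1 - ζ) * L₁) with hτdef
    have hden : (0:ℝ) < 2 * (1 - ζ) * L₁ := by positivity
    have hτpos : 0 < τ := div_pos (mul_pos (by linarith) (hμpos k)) hden
    have hminpos : 0 < min 1 τ := lt_min one_pos hτpos
    have hminle1 : min 1 τ ≤ 1 := min_le_left _ _
    rcases Nat.eq_zero_or_pos (i k) with hik | hik
    · have h1 := hFdec k
      rw [hik, pow_zero] at h1
      have hbm : β * min 1 τ ≤ 1 := by nlinarith [hβ0.le, hβ1.le, hminpos.le, hminle1]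
      have h2 : θ * (β * min 1 τ) * (ℓ k (x k) - ℓ k (xh k))
          ≤ θ * (1 * (ℓ k (x k) - ℓ k (xh k))) := by
        nlinarith [mul_nonneg (mul_nonneg hθ0.le (sub_nonneg.2 hbm)) (hdelnn k)]
      linarith
    · obtain ⟨j, hj⟩ : ∃ j, i k = j + 1 := ⟨i k - 1, (Nat.succ_pred_eq_of_pos hik).symm⟩
      have hmj := hmin k j (by omega)
      have hβj0 : (0:ℝ) < β ^ j := pow_pos hβ0 _
      have hβj1 : β ^ j ≤ 1 := pow_le_one₀ hβ0.le hβ1.le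
      have hminβj : min 1 τ ≤ β ^ j := by
        by_contra hcon
        push_neg at hcon
        have hτj : τ ≤ 1 ∨ 1 < τ := le_or_gt τ 1
        have hbig : 2 * (1 - ζ) * L₁ * β ^ j ≤ (1 - θ) * μ k := by
          rcases hτj with h | h
          · have : β ^ j < τ := by
              have := min_eq_right h ▸ hcon
              simpa [min_eq_right h] using hcon
            rw [hτdef, lt_div_iff₀ hden] at this
            nlinarith [this]
          · have hβj1' : β ^ j < 1 := by
              have := min_eq_left h.le ▸ hcon
              simpa [min_eq_left h.le] using hcon
            rw [hτdef, lt_div_iff₀ hden] at h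
            nlinarith [h, hβj0.le]
        have harm := harmijo k (β ^ j) hβj0 hβj1 hbig
        exact hmj harm
      have hβik : β * min 1 τ ≤ β ^ i k := by
        rw [hj, pow_succ, mul_comm (β ^ j) β]
        exact mul_le_mul_of_nonneg_left hminβj hβ0.le
      have h1 := hFdec k
      have h2 : θ * (β * min 1 τ) * (ℓ k (x k) - ℓ k (xh k))
          ≤ θ * (β ^ i k * (ℓ k (x k) - ℓ k (xh k))) := by
        nlinarith [mul_nonneg (mul_nonneg hθ0.le (sub_nonneg.2 hβik)) (hdelnn k)]
      linarith
  -- Phase 4: the residual eventually becomes small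
  have hKex : ∀ δ₀ : ℝ, 0 < δ₀ → ∃ K, r (x K) ≤ δ₀ := by
    intro δ₀ hδ₀
    by_contra hcon
    push_neg at hcon
    set dmin := (1 - η) * δ₀ / (2 + L₁ + c * δ₀) with hdmindef
    have hdenpos : (0:ℝ) < 2 + L₁ + c * δ₀ := by positivity
    have hdminpos : 0 < dmin := div_pos (mul_pos (by linarith) hδ₀) hdenpos
    set Δmin := c * δ₀ * dmin ^ 2 / (2 * (1 - ζ)) with hΔmindef
    have hΔminpos : 0 < Δmin := by positivity
    set τ₀ := (1 - θ) * (c * δ₀) / (2 * (1 - ζ) * L₁) with hτ₀def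
    have hτ₀pos : 0 < τ₀ := by
      rw [hτ₀def]
      apply div_pos (mul_pos (by linarith) (mul_pos hc hδ₀)) (by positivity)
    set ω := θ * (β * min 1 τ₀) * Δmin with hωdef
    have hωpos : 0 < ω := by
      apply mul_pos (mul_pos hθ0 (mul_pos hβ0 (lt_min one_pos hτ₀pos))) hΔminpos
    have hω : ∀ k, ω ≤ F (x k) - F (x (k + 1)) := by
      intro k
      have hRk := hcon k
      have hμk : c * δ₀ ≤ μ k := by rw [hμ' k]; nlinarith [hRk]
      have hdk : dmin ≤ ‖d k‖ := by
        have h1 := hrd k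
        rw [hμ' k] at h1
        rw [hdmindef, div_le_iff₀ hdenpos]
        have hc1 : (0:ℝ) < 2 + L₁ + c * r (x k) := by nlinarith [hrpos k]
        have h2 : (2 + L₁ + c * r (x k)) * ((1 - η) * δ₀)
            ≤ (2 + L₁ + c * r (x k)) * (‖d k‖ * (2 + L₁ + c * δ₀)) := by
          nlinarith [mul_le_mul_of_nonneg_right h1 hdenpos.le,
            mul_nonneg (mul_nonneg (by linarith : (0:ℝ) ≤ 1 - η)
              (by linarith : (0:ℝ) ≤ 2 + L₁)) (by linarith [hRk] : (0:ℝ) ≤ r (x k) - δ₀)]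
        exact le_of_mul_le_mul_left h2 hc1
      have hΔk : Δmin ≤ ℓ k (x k) - ℓ k (xh k) := by
        have h1 := hdel2 k
        rw [hΔmindef, div_le_iff₀ (by linarith : (0:ℝ) < 2 * (1 - ζ))]
        have h2 : c * δ₀ * dmin ^ 2 ≤ μ k * ‖d k‖ ^ 2 :=
          mul_le_mul hμk (pow_le_pow_left₀ hdminpos.le hdk 2) (by positivity)
            ((mul_pos hc hδ₀).le.trans hμk)
        nlinarith [h1, h2]
      have hτk : min 1 τ₀ ≤ min 1 ((1 - θ) * μ k / (2 * (1 - ζ) * L₁)) := by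
        apply min_le_min (le_refl 1)
        rw [hτ₀def, div_le_div_iff₀ (by positivity) (by positivity)]
        have hnum : (1 - θ) * (c * δ₀) ≤ (1 - θ) * μ k :=
          mul_le_mul_of_nonneg_left hμk (by linarith)
        nlinarith [hnum, mul_pos (mul_pos two_pos h1ζ) hL₁]
      have hmins : 0 ≤ min 1 τ₀ := (lt_min one_pos hτ₀pos).le
      have hlb := hstep_lb k
      have hA : θ * (β * min 1 τ₀) * Δmin
          ≤ θ * (β * min 1 ((1 - θ) * μ k / (2 * (1 - ζ) * L₁))) *
            (ℓ k (x k) - ℓ k (xh k)) := by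
        apply mul_le_mul
        · exact mul_le_mul_of_nonneg_left (mul_le_mul_of_nonneg_left hτk hβ0.le) hθ0.le
        · exact hΔk
        · exact hΔminpos.le
        · exact mul_nonneg hθ0.le (mul_nonneg hβ0.le (le_trans hmins hτk))
      linarith [hlb]
    have htel : ∀ N : ℕ, F (x N) + N * ω ≤ F (x 0) := by
      intro N
      induction N with
      | zero => simp
      | succ N ih =>
        have := hω N
        push_cast
        push_cast at ih
        linarith
    obtain ⟨N, hN⟩ := exists_nat_gt ((F (x 0) - F xmin) / ω)
    have h1 := htel N
    have h2 := hFxmin (x N)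
    rw [div_lt_iff₀ hωpos] at hN
    linarith
  -- constants
  obtain ⟨m, hmdef⟩ : ∃ v : ℝ, v = ζ - θ := ⟨_, rfl⟩
  have hm : 0 < m := by rw [hmdef]; linarith only [hζθ]
  obtain ⟨s, hsdef⟩ : ∃ v : ℝ, v = min 1 (m / 4) := ⟨_, rfl⟩
  have hs0 : 0 < s := by rw [hsdef]; exact lt_min one_pos (by linarith only [hm])
  have hs1 : s ≤ 1 := by rw [hsdef]; exact min_le_left _ _
  have hsm : s ≤ m / 4 := by rw [hsdef]; exact min_le_right _ _
  obtain ⟨κ₁, hκ₁def⟩ : ∃ v : ℝ, v = κ * (1 + s) := ⟨_, rfl⟩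
  have hκ₁pos : 0 < κ₁ := by
    rw [hκ₁def]; exact mul_pos hκ (by linarith only [hs0])
  obtain ⟨R₀, hR₀def⟩ : ∃ v : ℝ, v = min (min 1 ε) (c * m / (4 * L₂)) := ⟨_, rfl⟩
  have hR₀pos : 0 < R₀ := by
    rw [hR₀def]
    exact lt_min (lt_min one_pos hε)
      (div_pos (mul_pos hc hm) (by linarith only [hL₂]))
  have hR₀1 : R₀ ≤ 1 := by
    rw [hR₀def]; exact le_trans (min_le_left _ _) (min_le_left _ _)
  have hR₀ε : R₀ ≤ ε := by
    rw [hR₀def]; exact le_trans (min_le_left _ _) (min_le_right _ _)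
  have hR₀m : R₀ ≤ c * m / (4 * L₂) := by rw [hR₀def]; exact min_le_right _ _
  obtain ⟨CuN, hCuNdef⟩ : ∃ v : ℝ,
      v = L₂ * κ₁ ^ 2 / 2 + c * κ₁ + (1 + L₁) * η + c * η * R₀ := ⟨_, rfl⟩
  have hCuNpos : 0 < CuN := by
    rw [hCuNdef]
    have h1 : 0 < L₂ * κ₁ ^ 2 / 2 := div_pos (mul_pos hL₂ (pow_pos hκ₁pos 2)) two_pos
    have h2 : 0 < c * κ₁ := mul_pos hc hκ₁pos
    have h3 : 0 < (1 + L₁) * η := mul_pos (by linarith only [hL₁]) hη0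
    have h4 : 0 < c * η * R₀ := mul_pos (mul_pos hc hη0) hR₀pos
    linarith only [h1, h2, h3, h4]
  obtain ⟨Cd, hCddef⟩ : ∃ v : ℝ, v = κ₁ + η * R₀ + CuN / c := ⟨_, rfl⟩
  have hcCd : c * Cd = c * κ₁ + c * (η * R₀) + CuN := by
    rw [hCddef]; field_simp
  have hCdpos : 0 < Cd := by
    rw [hCddef]
    linarith only [hκ₁pos, mul_pos hη0 hR₀pos, div_pos hCuNpos hc]
  obtain ⟨C₂, hC₂def⟩ : ∃ v : ℝ, v = 1 + L₂ * Cd ^ 2 + c * Cd := ⟨_, rfl⟩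
  have hC₂pos : 0 < C₂ := by
    rw [hC₂def]
    linarith only [mul_pos hL₂ (pow_pos hCdpos 2), mul_pos hc hCdpos]
  obtain ⟨δ₀, hδ₀def⟩ : ∃ v : ℝ, v = min R₀ (1 / (2 * C₂)) := ⟨_, rfl⟩
  have hδ₀pos : 0 < δ₀ := by
    rw [hδ₀def]
    exact lt_min hR₀pos (by positivity)
  have hδ₀R₀ : δ₀ ≤ R₀ := by rw [hδ₀def]; exact min_le_left _ _
  have hC₂δ : C₂ * δ₀ ≤ 1 / 2 := by
    have h1 : δ₀ ≤ 1 / (2 * C₂) := by rw [hδ₀def]; exact min_le_right _ _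
    rw [le_div_iff₀ (by linarith only [hC₂pos] : (0:ℝ) < 2 * C₂)] at h1
    linarith only [h1]
  -- the key constants inequality
  have kA : L₂ * κ₁ ≤ c * (1 + s) := by
    rw [hκ₁def]
    linarith only [mul_le_mul_of_nonneg_right hcκ (by linarith only [hs0] : (0:ℝ) ≤ 1 + s)]
  have kB : L₂ ^ 2 * κ₁ ^ 2 ≤ c ^ 2 * (1 + s) ^ 2 := by
    nlinarith only [kA, mul_nonneg hL₂.le hκ₁pos.le,
      mul_pos hc (show (0:ℝ) < 1 + s by linarith only [hs0])]
  have kC : L₂ * ((1 + L₁) * η) ≤ c ^ 2 / 2 := by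
    have h1 : η * (2 * (L₁ + 1)) ≤ κ ^ 2 * L₂ := by
      rw [le_div_iff₀ (by positivity)] at hηb; exact hηb
    have h2 : (0:ℝ) ≤ κ * L₂ := by positivity
    have h3 : κ * L₂ * (κ * L₂) ≤ c * c := mul_le_mul hcκ hcκ h2 (by linarith only [h2, hcκ])
    linarith only [mul_le_mul_of_nonneg_right h1 hL₂.le, h3]
  have kD : L₂ * R₀ ≤ c * m / 4 := by
    have h2 := mul_le_mul_of_nonneg_left hR₀m hL₂.le
    have e : L₂ * (c * m / (4 * L₂)) = c * m / 4 := by field_simp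
    rwa [e] at h2
  have KEY : L₂ * (c * Cd) * (1 - ζ) ≤ 3 * c ^ 2 * (1 - ζ) + 3 * c ^ 2 * m := by
    have kE : c * (η * (L₂ * R₀)) ≤ c * (c * m / 4) := by
      apply mul_le_mul_of_nonneg_left _ hc.le
      linarith only [kD,
        mul_nonneg (sub_nonneg.2 hη1.le) (mul_nonneg hL₂.le hR₀pos.le)]
    have KEY0 : L₂ * (c * Cd) ≤ c ^ 2 * (3 + 3 * s + s ^ 2 / 2 + m / 2) := by
      rw [hcCd, hCuNdef]
      linarith only [mul_le_mul_of_nonneg_left kA hc.le, kB, kC, kE]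
    have kF : (3 * s + s ^ 2 / 2 + m / 2) * (1 - ζ) ≤ 3 * m := by
      have hq1 : 0 ≤ ζ * (3 * s) := mul_nonneg hζ0.le (by linarith only [hs0])
      have hq2 : 0 ≤ ζ * s ^ 2 := mul_nonneg hζ0.le (sq_nonneg s)
      have hq3 : 0 ≤ ζ * m := mul_nonneg hζ0.le hm.le
      have hq4 : s ^ 2 ≤ s := by nlinarith only [hs0, hs1]
      linarith only [hq1, hq2, hq3, hq4, hsm, hm.le]
    linarith only [mul_le_mul_of_nonneg_right KEY0 h1ζ.le,
      mul_le_mul_of_nonneg_left kF (sq_nonneg c)]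
  -- the local one-step analysis
  have hloc : ∀ k, r (x k) ≤ δ₀ →
      x (k + 1) = xh k ∧ ‖d k‖ ≤ Cd * r (x k) ∧ r (x (k + 1)) ≤ C₂ * r (x k) ^ 2 := by
    intro k hRδ0
    obtain ⟨R, hRdef⟩ : ∃ v : ℝ, v = r (x k) := ⟨_, rfl⟩
    rw [show r (x k) = R from hRdef.symm]
    have hRδ : R ≤ δ₀ := by rw [hRdef]; exact hRδ0
    have hR0 : 0 < R := by rw [hRdef]; exact hrpos k
    have hRR₀ : R ≤ R₀ := le_trans hRδ hδ₀R₀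
    have hR1 : R ≤ 1 := le_trans hRR₀ hR₀1
    have hRε : R ≤ ε := le_trans hRR₀ hR₀ε
    -- a nearby minimizer
    have hinf : infDist (x k) X ≤ κ * R := by
      rw [hRdef]; exact hEB (x k) (hFx0 k) (by rw [← hRdef]; exact hRε)
    have hlt : infDist (x k) X < κ₁ * R := by
      apply lt_of_le_of_lt hinf
      rw [hκ₁def]
      linarith only [mul_pos (mul_pos hκ hs0) hR0]
    obtain ⟨xb, hxbX, hxbd⟩ := (Metric.infDist_lt_iff ⟨xmin, hxmin⟩).1 hlt
    have hxbmin : ∀ z, f xb + g xb ≤ f z + g z := by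
      intro z
      rw [← hF, ← hF]
      rw [hX] at hxbX
      exact hxbX z
    set a := xb - x k with hadef
    have ha : ‖a‖ ≤ κ₁ * R := by
      rw [hadef, norm_sub_rev, ← dist_eq_norm]
      exact hxbd.le
    set p := prox (xh k - f' (x k) - H k (d k)) with hpdef
    set w := xh k - p with hwdef
    have hw2 : ‖w‖ ≤ η * R ^ 2 := by
      have h1 := hrk2 k
      rw [hrk k (xh k), ← hd k, ← hRdef] at h1
      exact h1
    have hwnn : (0:ℝ) ≤ ‖w‖ := norm_nonneg w
    set u := xb - p with hudef
    -- variational inequalities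
    have s1 : ⟪(xh k - f' (x k) - H k (d k)) - p, xb - p⟫ ≤ g xb - g p :=
      prox_vi hgconv hprox _ xb
    have s2 : ⟪-f' xb, p - xb⟫ ≤ g p - g xb := min_subgrad hgconv (hgrad xb) hxbmin p
    have s3 : ⟪(xh k - f' (x k) - H k (d k)) - p, u⟫ + ⟪f' xb, u⟫ ≤ 0 := by
      have e : ⟪-f' xb, p - xb⟫ = -⟪f' xb, p - xb⟫ := inner_neg_left _ _
      have e2 : ⟪f' xb, u⟫ = -⟪f' xb, p - xb⟫ := by
        rw [hudef, show xb - p = -(p - xb) by abel, inner_neg_right]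
      rw [e2]
      rw [e] at s2
      rw [hudef]
      linarith only [s1, s2]
    have hds : d k = a + w - u := by
      rw [hd k, hudef, hadef, hwdef]; abel
    have key1 : ⟪H k u, u⟫ ≤ ⟪H k a + H k w - w + (f' (x k) - f' xb), u⟫ := by
      have e1 : (xh k - f' (x k) - H k (d k)) - p = w - f' (x k) - H k (d k) := by
        rw [hwdef]; abel
      have e2 : H k (d k) = H k a + H k w - H k u := by
        rw [hds]; simp [map_add, map_sub]
      rw [e1, e2] at s3
      have e3 : ⟪w - f' (x k) - (H k a + H k w - H k u), u⟫ + ⟪f' xb, u⟫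
          = ⟪H k u, u⟫ - ⟪H k a + H k w - w + (f' (x k) - f' xb), u⟫ := by
        simp only [inner_sub_left, inner_add_left]
        ring
      rw [e3] at s3
      linarith only [s3]
    have hz : ‖H k a + H k w - w + (f' (x k) - f' xb)‖
        ≤ μ k * ‖a‖ + L₂ / 2 * ‖a‖ ^ 2 + (1 + L₁ + μ k) * ‖w‖ := by
      have hT := taylor_grad hhess hlip2 (x k) a
      have exb : x k + a = xb := by rw [hadef]; abel
      rw [exb] at hT
      have e4 : H k a + H k w - w + (f' (x k) - f' xb)
          = (μ k • a - (f' xb - f' (x k) - hess (x k) a)) + (H k w - w) := by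
        rw [hHapply k a]; abel
      rw [e4]
      have t1 : ‖μ k • a - (f' xb - f' (x k) - hess (x k) a)‖
          ≤ μ k * ‖a‖ + L₂ / 2 * ‖a‖ ^ 2 := by
        calc ‖μ k • a - (f' xb - f' (x k) - hess (x k) a)‖
            ≤ ‖μ k • a‖ + ‖f' xb - f' (x k) - hess (x k) a‖ := norm_sub_le _ _
          _ ≤ μ k * ‖a‖ + L₂ / 2 * ‖a‖ ^ 2 := by
              have := norm_smul (μ k) a
              rw [this, Real.norm_eq_abs, abs_of_pos (hμpos k)]
              linarith only [hT]
      have t2 : ‖H k w - w‖ ≤ (1 + L₁ + μ k) * ‖w‖ := by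
        calc ‖H k w - w‖ ≤ ‖H k w‖ + ‖w‖ := norm_sub_le _ _
          _ ≤ (L₁ + μ k) * ‖w‖ + ‖w‖ := by linarith only [hHnorm k w]
          _ = (1 + L₁ + μ k) * ‖w‖ := by ring
      calc ‖_ + _‖ ≤ ‖μ k • a - (f' xb - f' (x k) - hess (x k) a)‖ + ‖H k w - w‖ :=
            norm_add_le _ _
        _ ≤ _ := by linarith only [t1, t2]
    have hu : c * ‖u‖ ≤ CuN * R := by
      rcases eq_or_lt_of_le (norm_nonneg u) with h0 | h0
      · rw [← h0]
        have h9 : (0:ℝ) ≤ CuN * R := mul_nonneg hCuNpos.le hR0.le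
        linarith only [h9]
      · have hiu : ⟪H k u, u⟫ ≤ (μ k * ‖a‖ + L₂ / 2 * ‖a‖ ^ 2 + (1 + L₁ + μ k) * ‖w‖) * ‖u‖ := by
          refine le_trans key1 (le_trans (real_inner_le_norm _ _) ?_)
          exact mul_le_mul_of_nonneg_right hz (norm_nonneg u)
        have h1 : μ k * ‖u‖ ≤ μ k * ‖a‖ + L₂ / 2 * ‖a‖ ^ 2 + (1 + L₁ + μ k) * ‖w‖ := by
          have h2 := hHquad k u
          have h3 : μ k * ‖u‖ * ‖u‖ ≤ (μ k * ‖a‖ + L₂ / 2 * ‖a‖ ^ 2 + (1 + L₁ + μ k) * ‖w‖) * ‖u‖ := by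
            linarith only [h2, hiu]
          exact le_of_mul_le_mul_right h3 h0
        rw [hμ' k, ← hRdef] at h1
        have hb1 : c * R * ‖a‖ ≤ c * R * (κ₁ * R) :=
          mul_le_mul_of_nonneg_left ha (by positivity)
        have hb2 : L₂ / 2 * ‖a‖ ^ 2 ≤ L₂ / 2 * (κ₁ * R) ^ 2 := by
          have h9 := pow_le_pow_left₀ (norm_nonneg a) ha 2
          nlinarith only [h9, hL₂.le]
        have hb3 : (1 + L₁ + c * R) * ‖w‖ ≤ (1 + L₁ + c * R) * (η * R ^ 2) := by
          apply mul_le_mul_of_nonneg_left hw2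
          linarith only [mul_pos hc hR0, hL₁']
        have h2 : R * (c * ‖u‖) ≤ R * (CuN * R) := by
          rw [hCuNdef]
          linarith only [h1, hb1, hb2, hb3,
            mul_nonneg (mul_nonneg (mul_nonneg hc.le hη0.le) (sq_nonneg R))
              (sub_nonneg.2 hRR₀)]
        exact le_of_mul_le_mul_left h2 hR0
    -- step bound
    have hdb : ‖d k‖ ≤ Cd * R := by
      have h1 : ‖d k‖ ≤ ‖a‖ + ‖w‖ + ‖u‖ := by
        rw [hds]
        calc ‖a + w - u‖ ≤ ‖a + w‖ + ‖u‖ := norm_sub_le _ _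
          _ ≤ ‖a‖ + ‖w‖ + ‖u‖ := by linarith [norm_add_le a w]
      have h2 : c * ‖d k‖ ≤ (c * Cd) * R := by
        rw [hcCd]
        have hw3 : c * ‖w‖ ≤ c * (η * R₀) * R := by
          have h9 : η * R ^ 2 ≤ η * R₀ * R := by
            linarith only [mul_nonneg (mul_nonneg hη0.le (sub_nonneg.2 hRR₀)) hR0.le]
          linarith only [mul_le_mul_of_nonneg_left (le_trans hw2 h9) hc.le]
        linarith only [mul_le_mul_of_nonneg_left h1 hc.le, hu, hw3,
          mul_le_mul_of_nonneg_left ha hc.le]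
      have h3 : c * ‖d k‖ ≤ c * (Cd * R) := by linarith only [h2]
      exact le_of_mul_le_mul_left h3 hc
    -- unit step is accepted
    have hμR : μ k = c * R := by rw [hRdef]; exact hμ' k
    have hTf := taylor_f hgrad hhess hlip2 (x k) (d k)
    rw [← hxh k] at hTf
    have hFxh : F (xh k) ≤ ℓ k (xh k) + 1/2 * ⟪hess (x k) (d k), d k⟫ + L₂/6 * ‖d k‖ ^ 3 := by
      rw [hF, hℓxh k]
      linarith only [hTf]
    have hhd : ⟪hess (x k) (d k), d k⟫ = ⟪H k (d k), d k⟫ - μ k * ‖d k‖ ^ 2 := by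
      rw [hHdd k (d k)]; ring
    have hdel2R : c * R * ‖d k‖ ^ 2 ≤ 2 * (1 - ζ) * (ℓ k (x k) - ℓ k (xh k)) := by
      have := hdel2 k; rwa [hμR] at this
    have hkey3 : L₂/6 * ‖d k‖ ^ 3 ≤ m * (ℓ k (x k) - ℓ k (xh k)) + c * R * ‖d k‖ ^ 2 / 2 := by
      have t1 : c * (L₂ * ‖d k‖) * (1 - ζ) ≤ (3 * c ^ 2 * (1 - ζ) + 3 * c ^ 2 * m) * R := by
        have t0 : c * (L₂ * ‖d k‖) ≤ L₂ * (c * Cd) * R := by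
          linarith [mul_le_mul_of_nonneg_left hdb (mul_nonneg hc.le hL₂.le)]
        linarith [mul_le_mul_of_nonneg_right t0 h1ζ.le,
          mul_le_mul_of_nonneg_right KEY hR0.le]
      have X1 := mul_le_mul_of_nonneg_right t1 (sq_nonneg ‖d k‖)
      have X2 := mul_le_mul_of_nonneg_left hdel2R
        (by linarith only [mul_pos (mul_pos (show (0:ℝ) < 3 by norm_num) hc) hm] :
          (0:ℝ) ≤ 3 * c * m)
      have hBIG : (6 * c * (1 - ζ)) * (L₂/6 * ‖d k‖ ^ 3)
          ≤ (6 * c * (1 - ζ)) * (m * (ℓ k (x k) - ℓ k (xh k)) + c * R * ‖d k‖ ^ 2 / 2) := by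
        linarith [X1, X2]
      exact le_of_mul_le_mul_left hBIG
        (mul_pos (mul_pos (by norm_num : (0:ℝ) < 6) hc) h1ζ)
    have htest : θ * (ℓ k (x k) - ℓ k (xh k)) ≤ F (x k) - F (xh k) := by
      have h5 := hhalfHd k
      have h6 := hFl k
      rw [hhd] at hFxh
      rw [hmdef] at hkey3
      rw [hμR] at hFxh
      linarith [hFxh, h5, hkey3, hdelnn k]
    have hik0 : i k = 0 := by
      by_contra h0
      have hm0 := hmin k 0 (Nat.pos_of_ne_zero h0)
      apply hm0
      rw [pow_zero, one_smul, ← hxh k]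
      exact htest
    have hx1 : x (k + 1) = xh k := by
      rw [hstep k, hα k, hik0, pow_zero, one_smul, ← hxh k]
    refine ⟨hx1, hdb, ?_⟩
    -- quadratic residual decrease
    rw [hx1, hr (xh k)]
    have hA := norm_sub_le_norm_sub_add_norm_sub (xh k) p (prox (xh k - f' (xh k)))
    have hB : ‖p - prox (xh k - f' (xh k))‖ ≤ ‖f' (xh k) - f' (x k) - H k (d k)‖ := by
      have hne := prox_nonexp hgconv hprox (xh k - f' (x k) - H k (d k)) (xh k - f' (xh k))
      have e : (xh k - f' (x k) - H k (d k)) - (xh k - f' (xh k))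
          = f' (xh k) - f' (x k) - H k (d k) := by abel
      rw [e] at hne
      exact hne
    have hC : ‖f' (xh k) - f' (x k) - H k (d k)‖ ≤ L₂/2 * ‖d k‖ ^ 2 + μ k * ‖d k‖ := by
      have hT2 := taylor_grad hhess hlip2 (x k) (d k)
      rw [← hxh k] at hT2
      have e : f' (xh k) - f' (x k) - H k (d k)
          = (f' (xh k) - f' (x k) - hess (x k) (d k)) - μ k • d k := by
        rw [hHapply k (d k)]; abel
      rw [e]
      calc ‖(f' (xh k) - f' (x k) - hess (x k) (d k)) - μ k • d k‖
          ≤ ‖f' (xh k) - f' (x k) - hess (x k) (d k)‖ + ‖μ k • d k‖ := norm_sub_le _ _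
        _ ≤ L₂/2 * ‖d k‖ ^ 2 + μ k * ‖d k‖ := by
            rw [norm_smul, Real.norm_eq_abs, abs_of_pos (hμpos k)]
            linarith only [hT2]
    have hD : ‖xh k - p‖ ≤ η * R ^ 2 := hw2
    have hE1 : L₂/2 * ‖d k‖ ^ 2 ≤ L₂ * Cd ^ 2 * R ^ 2 := by
      have h9 := pow_le_pow_left₀ (norm_nonneg (d k)) hdb 2
      nlinarith only [h9, hL₂.le]
    have hE2 : μ k * ‖d k‖ ≤ c * Cd * R ^ 2 := by
      rw [hμR]
      linarith [mul_le_mul_of_nonneg_left hdb (mul_pos hc hR0).le]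
    have hE3 : η * R ^ 2 ≤ 1 * R ^ 2 := by
      linarith only [mul_nonneg (sub_nonneg.2 hη1.le) (sq_nonneg R)]
    rw [hC₂def]
    linarith only [hA, hB, hC, hD, hE1, hE2, hE3]
  -- Phase 6 : convergence
  obtain ⟨K, hK⟩ := hKex δ₀ hδ₀pos
  have hsmall : ∀ j : ℕ, r (x (K + j)) ≤ δ₀ * (1 / 2) ^ j := by
    intro j
    induction j with
    | zero => simpa using hK
    | succ j ih =>
      have hpow1 : ((1:ℝ) / 2) ^ j ≤ 1 := pow_le_one₀ (by norm_num) (by norm_num)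
      have hpownn : (0:ℝ) ≤ (1 / 2) ^ j := by positivity
      have hrj : r (x (K + j)) ≤ δ₀ := by
        refine le_trans ih ?_
        nlinarith only [hδ₀pos, hpow1, hpownn]
      have h1 := (hloc (K + j) hrj).2.2
      have h2 : r (x (K + j + 1)) ≤ C₂ * δ₀ * r (x (K + j)) := by
        refine le_trans h1 ?_
        have := mul_le_mul_of_nonneg_left hrj
          (mul_nonneg hC₂pos.le (hrpos (K + j)).le)
        nlinarith only [this, hC₂pos, hrpos (K + j)]
      have h3 : r (x (K + j + 1)) ≤ (1 / 2) * r (x (K + j)) := by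
        refine le_trans h2 ?_
        exact mul_le_mul_of_nonneg_right hC₂δ (hrpos (K + j)).le
      calc r (x (K + (j + 1))) = r (x (K + j + 1)) := rfl
        _ ≤ (1 / 2) * r (x (K + j)) := h3
        _ ≤ (1 / 2) * (δ₀ * (1 / 2) ^ j) := by linarith only [ih]
        _ = δ₀ * (1 / 2) ^ (j + 1) := by ring
  have hsmall' : ∀ k, K ≤ k → r (x k) ≤ δ₀ := by
    intro k hk
    obtain ⟨j, rfl⟩ := Nat.exists_eq_add_of_le hk
    refine le_trans (hsmall j) ?_
    have hpow1 : ((1:ℝ) / 2) ^ j ≤ 1 := pow_le_one₀ (by norm_num) (by norm_num)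
    nlinarith only [hδ₀pos, hpow1]
  have hgeo : ∀ k, K ≤ k → ∀ j : ℕ, r (x (k + j)) ≤ (1 / 2) ^ j * r (x k) := by
    intro k hk j
    induction j with
    | zero => simp
    | succ j ih =>
      have hrj : r (x (k + j)) ≤ δ₀ := hsmall' (k + j) (by omega)
      have h1 := (hloc (k + j) hrj).2.2
      have h2 : r (x (k + j + 1)) ≤ (1 / 2) * r (x (k + j)) := by
        refine le_trans h1 ?_
        have h3 : C₂ * r (x (k + j)) ≤ C₂ * δ₀ :=
          mul_le_mul_of_nonneg_left hrj hC₂pos.le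
        nlinarith only [h3, hC₂δ, hrpos (k + j)]
      calc r (x (k + (j + 1))) = r (x (k + j + 1)) := rfl
        _ ≤ (1 / 2) * r (x (k + j)) := h2
        _ ≤ (1 / 2) * ((1 / 2) ^ j * r (x k)) := by linarith only [ih]
        _ = (1 / 2) ^ (j + 1) * r (x k) := by ring
  have hstepb : ∀ k, K ≤ k → ‖x (k + 1) - x k‖ ≤ Cd * r (x k) := by
    intro k hk
    have h1 := (hloc k (hsmall' k hk)).1
    have h2 := (hloc k (hsmall' k hk)).2.1
    rw [h1, hxh k]
    simpa using h2
  have hdistb : ∀ k, K ≤ k → ∀ j : ℕ,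
      ‖x (k + j) - x k‖ ≤ 2 * Cd * r (x k) * (1 - (1 / 2) ^ j) := by
    intro k hk j
    induction j with
    | zero => simp
    | succ j ih =>
      have h1 := hstepb (k + j) (by omega)
      have h2 := hgeo k hk j
      have h3 : ‖x (k + (j + 1)) - x k‖
          ≤ ‖x (k + j + 1) - x (k + j)‖ + ‖x (k + j) - x k‖ := by
        have := norm_sub_le_norm_sub_add_norm_sub (x (k + (j + 1))) (x (k + j)) (x k)
        have e : k + (j + 1) = k + j + 1 := by omega
        rw [e]
        rw [e] at this
        exact this
      have h4 : ‖x (k + j + 1) - x (k + j)‖ ≤ Cd * ((1 / 2) ^ j * r (x k)) := by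
        refine le_trans h1 ?_
        exact mul_le_mul_of_nonneg_left h2 hCdpos.le
      calc ‖x (k + (j + 1)) - x k‖
          ≤ Cd * ((1 / 2) ^ j * r (x k)) + 2 * Cd * r (x k) * (1 - (1 / 2) ^ j) := by
            linarith only [h3, h4, ih]
        _ = 2 * Cd * r (x k) * (1 - (1 / 2) ^ (j + 1)) := by ring
  -- Cauchy sequence and limit
  have hcauchy : CauchySeq (fun j : ℕ => x (K + j)) := by
    apply cauchySeq_of_le_geometric (1 / 2) (Cd * δ₀) (by norm_num)
    intro j
    rw [dist_eq_norm]
    have h1 : ‖x (K + j) - x (K + (j + 1))‖ = ‖x (K + j + 1) - x (K + j)‖ := by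
      rw [show K + (j + 1) = K + j + 1 from rfl, norm_sub_rev]
    rw [h1]
    refine le_trans (hstepb (K + j) (by omega)) ?_
    have h2 : r (x (K + j)) ≤ δ₀ * (1 / 2) ^ j := hsmall j
    calc Cd * r (x (K + j)) ≤ Cd * (δ₀ * (1 / 2) ^ j) :=
          mul_le_mul_of_nonneg_left h2 hCdpos.le
      _ = Cd * δ₀ * (1 / 2) ^ j := by ring
  obtain ⟨xstar, hxstar⟩ := cauchySeq_tendsto_of_complete hcauchy
  have hxt : Tendsto x atTop (nhds xstar) := by
    have h1 : Tendsto (fun j : ℕ => x (j + K)) atTop (nhds xstar) := by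
      have e : (fun j : ℕ => x (j + K)) = fun j : ℕ => x (K + j) := by
        funext j; rw [Nat.add_comm]
      rw [e]; exact hxstar
    exact (tendsto_add_atTop_iff_nat K).1 h1
  -- the limit is a minimizer
  have hFcont : Continuous F := by
    have e : F = fun y => f y + g y := funext hF
    rw [e]; exact (hfC2.continuous).add hgcont
  have hXclosed : IsClosed X := by
    rw [hX]
    have e : {y : E n | ∀ z, F y ≤ F z} = ⋂ z, {y : E n | F y ≤ F z} := by
      ext y; simp
    rw [e]
    exact isClosed_iInter fun z => isClosed_le hFcont continuous_const
  have hxstarX : xstar ∈ X := by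
    have h1 : Tendsto (fun j : ℕ => infDist (x (K + j)) X) atTop
        (nhds (infDist xstar X)) :=
      ((continuous_infDist_pt X).tendsto xstar).comp hxstar
    have h2 : Tendsto (fun j : ℕ => κ * δ₀ * (1 / 2) ^ j) atTop (nhds 0) := by
      have h3 : Tendsto (fun j : ℕ => ((1:ℝ) / 2) ^ j) atTop (nhds 0) :=
        tendsto_pow_atTop_nhds_zero_of_lt_one (by norm_num) (by norm_num)
      simpa using h3.const_mul (κ * δ₀)
    have h4 : infDist xstar X ≤ 0 := by
      refine le_of_tendsto_of_tendsto' h1 h2 fun j => ?_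
      have h5 : infDist (x (K + j)) X ≤ κ * r (x (K + j)) := by
        apply hEB _ (hFx0 _)
        exact le_trans (hsmall' (K + j) (by omega)) (le_trans hδ₀R₀ hR₀ε)
      refine le_trans h5 ?_
      calc κ * r (x (K + j)) ≤ κ * (δ₀ * (1 / 2) ^ j) :=
            mul_le_mul_of_nonneg_left (hsmall j) hκ.le
        _ = κ * δ₀ * (1 / 2) ^ j := by ring
    have h6 : infDist xstar X = 0 := le_antisymm h4 (infDist_nonneg)
    exact (hXclosed.mem_iff_infDist_zero ⟨xmin, hxmin⟩).2 h6
  -- residual compared with distance to the limit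
  have hxstarfix : prox (xstar - f' xstar) = xstar := by
    apply hfix
    rw [hX] at hxstarX
    exact hxstarX
  have hrle : ∀ k, r (x k) ≤ (2 + L₁) * ‖x k - xstar‖ := by
    intro k
    rw [hr (x k)]
    have h1 := prox_nonexp hgconv hprox (xstar - f' xstar) (x k - f' (x k))
    rw [hxstarfix] at h1
    have h2 : ‖x k - prox (x k - f' (x k))‖
        ≤ ‖x k - xstar‖ + ‖xstar - prox (x k - f' (x k))‖ :=
      norm_sub_le_norm_sub_add_norm_sub _ _ _
    have h3 : ‖(xstar - f' xstar) - (x k - f' (x k))‖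
        ≤ ‖xstar - x k‖ + ‖f' xstar - f' (x k)‖ := by
      have e : (xstar - f' xstar) - (x k - f' (x k))
          = (xstar - x k) - (f' xstar - f' (x k)) := by abel
      rw [e]; exact norm_sub_le _ _
    have h4 : ‖f' xstar - f' (x k)‖ ≤ L₁ * ‖xstar - x k‖ := hlip xstar (x k)
    have h5 : ‖xstar - x k‖ = ‖x k - xstar‖ := norm_sub_rev _ _
    rw [h5] at h4
    linarith only [h1, h2, h3, h4, h5]
  -- distance to the limit bounded by the residual
  have hlimd : ∀ k, K ≤ k → ‖x k - xstar‖ ≤ 2 * Cd * r (x k) := by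
    intro k hk
    have h1 : Tendsto (fun j : ℕ => x (k + j)) atTop (nhds xstar) := by
      have h2 : Tendsto (fun j : ℕ => x (j + k)) atTop (nhds xstar) :=
        hxt.comp (tendsto_add_atTop_nat k)
      have e : (fun j : ℕ => x (k + j)) = fun j : ℕ => x (j + k) := by
        funext j; rw [Nat.add_comm]
      rw [e]; exact h2
    have h3 : Tendsto (fun j : ℕ => ‖x (k + j) - x k‖) atTop
        (nhds ‖xstar - x k‖) := ((h1.sub tendsto_const_nhds).norm)
    have h4 : ‖xstar - x k‖ ≤ 2 * Cd * r (x k) := by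
      refine le_of_tendsto h3 (Eventually.of_forall fun j => ?_)
      refine le_trans (hdistb k hk j) ?_
      have h5 : (0:ℝ) ≤ 2 * Cd * r (x k) :=
        mul_nonneg (mul_nonneg (by norm_num) hCdpos.le) (hrpos k).le
      have h6 : (0:ℝ) ≤ (1 / 2) ^ j := by positivity
      nlinarith only [h5, h6]
    rwa [norm_sub_rev] at h4
  -- conclusion
  refine ⟨xstar, hxstarX, hxt, 2 * Cd * C₂ * (2 + L₁) ^ 2 + 1, by positivity, K, ?_⟩
  intro k hk
  have h1 : ‖x (k + 1) - xstar‖ ≤ 2 * Cd * r (x (k + 1)) := hlimd (k + 1) (by omega)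
  have h2 : r (x (k + 1)) ≤ C₂ * r (x k) ^ 2 := (hloc k (hsmall' k hk)).2.2
  have h3 : r (x k) ≤ (2 + L₁) * ‖x k - xstar‖ := hrle k
  have h4 : r (x k) ^ 2 ≤ (2 + L₁) ^ 2 * ‖x k - xstar‖ ^ 2 := by
    have h5 := pow_le_pow_left₀ (hrpos k).le h3 2
    calc r (x k) ^ 2 ≤ ((2 + L₁) * ‖x k - xstar‖) ^ 2 := h5
      _ = (2 + L₁) ^ 2 * ‖x k - xstar‖ ^ 2 := by ring
  have h6 : 2 * Cd * r (x (k + 1)) ≤ 2 * Cd * (C₂ * r (x k) ^ 2) :=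
    mul_le_mul_of_nonneg_left h2 (by linarith only [hCdpos])
  have h7 : 2 * Cd * (C₂ * r (x k) ^ 2) ≤ 2 * Cd * (C₂ * ((2 + L₁) ^ 2 * ‖x k - xstar‖ ^ 2)) := by
    apply mul_le_mul_of_nonneg_left _ (by linarith only [hCdpos])
    exact mul_le_mul_of_nonneg_left h4 hC₂pos.le
  have h8 : (0:ℝ) ≤ ‖x k - xstar‖ ^ 2 := sq_nonneg _
  nlinarith only [h1, h6, h7, h8, hCdpos, hC₂pos, hL₁']
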